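/- (Quantum Fisher information dominates classical Fisher information) For any POVM measurement {X_x} on a pure state |ψ(θ)⟩ with outcome probabilities p(x;θ) = ⟨ψ|X_x†X_x|ψ⟩, the classical Fisher information satisfies E[(∂/∂θ log p(x;θ))²] ≤ 4[⟨∂_θψ|∂_θψ⟩ - |⟨ψ|∂_θψ⟩|²]. -/

import Mathlib

open scoped InnerProductSpace

/-- QFI dominates classical Fisher information: for any POVM `{Xᵢ}` on a pure state
`|ψ(θ)⟩` with Born-rule probabilities `pᵢ(θ) = ⟨ψ|Xᵢ†Xᵢ|ψ⟩`, the classical Fisher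
information is at most `4[⟨∂θψ|∂θψ⟩ - |⟨ψ|∂θψ⟩|²]`. (Terms with `pᵢ(θ) = 0`
contribute `0` to the sum, by the convention `a / 0 = 0`.) -/
theorem classical_fisher_le_qfi {H : Type*} [NormedAddCommGroup H]
    [InnerProductSpace ℂ H] [CompleteSpace H] {ι : Type*} [Fintype ι]
    (ψ dψ : ℝ → H) (θ : ℝ)
    (hψ : ∀ t, ‖ψ t‖ = 1)
    (hd : ∀ t, HasDerivAt ψ (dψ t) t)
    (M : ι → H →L[ℂ] H)
    (hM : ∑ i, (ContinuousLinearMap.adjoint (M i)).comp (M i) = 1)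
    (p : ι → ℝ → ℝ)
    (hp : ∀ i t, p i t =
      (⟪ψ t, ((ContinuousLinearMap.adjoint (M i)).comp (M i)) (ψ t)⟫_ℂ).re) :
    ∑ i, (deriv (p i) θ) ^ 2 / p i θ ≤
      4 * ((⟪dψ θ, dψ θ⟫_ℂ).re - ‖⟪ψ θ, dψ θ⟫_ℂ‖ ^ 2) := by
  have hsel : ∀ x : H, (⟪x, x⟫_ℂ) = ((‖x‖ ^ 2 : ℝ) : ℂ) := by
    intro x
    rw [inner_self_eq_norm_sq_to_K (𝕜 := ℂ)]
    norm_cast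
  have hselre : ∀ x : H, (⟪x, x⟫_ℂ).re = ‖x‖ ^ 2 := by
    intro x; rw [hsel x, Complex.ofReal_re]
  have hselim : ∀ x : H, (⟪x, x⟫_ℂ).im = 0 := by
    intro x; rw [hsel x, Complex.ofReal_im]
  set c : ℂ := ⟪ψ θ, dψ θ⟫_ℂ with hcdef
  set φ : H := dψ θ - c • ψ θ with hφdef
  have key_adj : ∀ (i : ι) (x y : H),
      ⟪x, ((ContinuousLinearMap.adjoint (M i)).comp (M i)) y⟫_ℂ = ⟪M i x, M i y⟫_ℂ := by
    intro i x y
    simp [ContinuousLinearMap.adjoint_inner_right]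
  -- Re c = 0
  have hre : c.re = 0 := by
    have h1 : HasDerivAt (fun t => (⟪ψ t, ψ t⟫_ℂ).re)
        ((⟪ψ θ, dψ θ⟫_ℂ + ⟪dψ θ, ψ θ⟫_ℂ).re) θ := by
      exact (Complex.reCLM.hasFDerivAt.comp_hasDerivAt θ
        ((hd θ).inner ℂ (hd θ)))
    have h2 : (fun t => (⟪ψ t, ψ t⟫_ℂ).re) = fun _ => (1 : ℝ) := by
      funext t
      rw [hselre (ψ t), hψ t]; norm_num
    rw [h2] at h1
    have h3 := h1.unique (hasDerivAt_const θ 1)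
    have h4 : (⟪dψ θ, ψ θ⟫_ℂ).re = c.re := by
      rw [← inner_conj_symm (dψ θ) (ψ θ), ← hcdef, Complex.conj_re]
    rw [Complex.add_re, h4] at h3
    rw [← hcdef] at h3
    linarith [h3]
  -- derivative of p i
  have hderiv : ∀ i, deriv (p i) θ = 2 * (⟪M i (ψ θ), M i (dψ θ)⟫_ℂ).re := by
    intro i
    have hAd : HasDerivAt
        (fun t => ((ContinuousLinearMap.adjoint (M i)).comp (M i)) (ψ t))
        (((ContinuousLinearMap.adjoint (M i)).comp (M i)) (dψ θ)) θ := by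
      simpa [Function.comp_def] using
        ((((ContinuousLinearMap.adjoint (M i)).comp (M i)).restrictScalars
          ℝ).hasFDerivAt.comp_hasDerivAt θ (hd θ))
    have h1 : HasDerivAt (fun t => (⟪ψ t, ((ContinuousLinearMap.adjoint (M i)).comp (M i)) (ψ t)⟫_ℂ).re)
        ((⟪ψ θ, ((ContinuousLinearMap.adjoint (M i)).comp (M i)) (dψ θ)⟫_ℂ
          + ⟪dψ θ, ((ContinuousLinearMap.adjoint (M i)).comp (M i)) (ψ θ)⟫_ℂ).re) θ :=
      Complex.reCLM.hasFDerivAt.comp_hasDerivAt θ ((hd θ).inner ℂ hAd)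
    have h2 : (fun t => (⟪ψ t, ((ContinuousLinearMap.adjoint (M i)).comp (M i)) (ψ t)⟫_ℂ).re) = p i := by
      funext t; rw [hp i t]
    rw [h2] at h1
    rw [h1.deriv, key_adj i (ψ θ) (dψ θ), key_adj i (dψ θ) (ψ θ),
      ← inner_conj_symm (M i (dψ θ)) (M i (ψ θ)), Complex.add_re, Complex.conj_re]
    ring
  -- per-index bound
  have hbound : ∀ i, (deriv (p i) θ) ^ 2 / p i θ ≤ 4 * ‖M i φ‖ ^ 2 := by
    intro i
    have hpθ : p i θ = ‖M i (ψ θ)‖ ^ 2 := by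
      rw [hp i θ, key_adj i, hselre]
    have hMφ : M i φ = M i (dψ θ) - c • M i (ψ θ) := by
      rw [hφdef]; simp
    have hq : deriv (p i) θ = 2 * (⟪M i (ψ θ), M i φ⟫_ℂ).re := by
      rw [hderiv i, hMφ, inner_sub_right, inner_smul_right, Complex.sub_re,
        Complex.mul_re, hselim, hre]
      ring
    rcases eq_or_lt_of_le (norm_nonneg (M i (ψ θ))) with h0 | h0
    · -- M i (ψ θ) = 0
      have hz : M i (ψ θ) = 0 := by
        rw [← norm_eq_zero]; exact h0.symm
      have hd0 : deriv (p i) θ = 0 := by rw [hq, hz]; simp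
      have hl : (deriv (p i) θ) ^ 2 / p i θ = 0 := by rw [hd0]; simp
      rw [hl]
      positivity
    · have hppos : 0 < p i θ := by rw [hpθ]; positivity
      rw [div_le_iff₀ hppos, hpθ, hq]
      have h1 : |(⟪M i (ψ θ), M i φ⟫_ℂ).re| ≤ ‖M i (ψ θ)‖ * ‖M i φ‖ := by
        calc |(⟪M i (ψ θ), M i φ⟫_ℂ).re| ≤ ‖⟪M i (ψ θ), M i φ⟫_ℂ‖ :=
              Complex.abs_re_le_norm _
          _ ≤ ‖M i (ψ θ)‖ * ‖M i φ‖ := norm_inner_le_norm _ _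
      have h2 : (⟪M i (ψ θ), M i φ⟫_ℂ).re ^ 2 ≤ (‖M i (ψ θ)‖ * ‖M i φ‖) ^ 2 := by
        rw [← sq_abs]
        exact pow_le_pow_left₀ (abs_nonneg _) h1 2
      nlinarith [h2]
  -- sum of the upper bounds
  have hsum : ∑ i, 4 * ‖M i φ‖ ^ 2 = 4 * ((⟪dψ θ, dψ θ⟫_ℂ).re - ‖c‖ ^ 2) := by
    have h1 : (∑ i, (‖M i φ‖ ^ 2 : ℝ)) = (⟪φ, φ⟫_ℂ).re := by
      have h2 : ⟪φ, ((∑ i, (ContinuousLinearMap.adjoint (M i)).comp (M i))) φ⟫_ℂ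
          = ∑ i, ⟪M i φ, M i φ⟫_ℂ := by
        rw [ContinuousLinearMap.sum_apply, inner_sum]
        exact Finset.sum_congr rfl fun i _ => key_adj i φ φ
      rw [hM] at h2
      simp only [ContinuousLinearMap.one_apply] at h2
      calc (∑ i, (‖M i φ‖ ^ 2 : ℝ)) = (∑ i, ⟪M i φ, M i φ⟫_ℂ).re := by
            rw [Complex.re_sum]
            exact Finset.sum_congr rfl fun i _ => (hselre _).symm
        _ = (⟪φ, φ⟫_ℂ).re := by rw [← h2]
    have h3 : ⟪φ, φ⟫_ℂ = ⟪dψ θ, dψ θ⟫_ℂ - c * starRingEnd ℂ c := by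
      have hψψ : ⟪ψ θ, ψ θ⟫_ℂ = 1 := by
        rw [hsel (ψ θ), hψ θ]; norm_num
      rw [hφdef, inner_sub_sub_self, inner_smul_left, inner_smul_right,
        inner_smul_left, inner_smul_right, hψψ,
        ← inner_conj_symm (dψ θ) (ψ θ), ← hcdef]
      ring
    have h4 : (c * starRingEnd ℂ c).re = ‖c‖ ^ 2 := by
      rw [Complex.mul_conj, Complex.ofReal_re, Complex.sq_norm]
    rw [← Finset.mul_sum, h1, h3, Complex.sub_re, h4]
  calc ∑ i, (deriv (p i) θ) ^ 2 / p i θ ≤ ∑ i, 4 * ‖M i φ‖ ^ 2 :=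
        Finset.sum_le_sum fun i _ => hbound i
    _ = 4 * ((⟪dψ θ, dψ θ⟫_ℂ).re - ‖c‖ ^ 2) := hsum
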